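/- Let 2 < p < ∞ be real and let r satisfy 1/r = 1/2 + 1/p. There exists a constant K ≥ 1 (one may take Grothendieck's constant K_G) such that: for every m ∈ ℕ, all real scalars λ_1, …, λ_m, every n ∈ ℕ and all continuous linear functionals x_1*, …, x_n* on ℓ_p satisfying sup_{‖x‖ ≤ 1} ∑_{k=1}^n |x_k*(x)| ≤ 1, one has ∑_{k=1}^n | ∑_{i=1}^m λ_i |x_k*(e_i)| | ≤ K · (∑_{i=1}^m |λ_i|^r)^{1/r}. -/

import Mathlib

open Finset


private def sg (b : Bool) : ℝ := if b then 1 else -1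

private lemma abs_sg (b : Bool) : |sg b| = 1 := by cases b <;> simp [sg]

private lemma sg_true : sg true = 1 := rfl
private lemma sg_false : sg false = -1 := rfl

private lemma sum_sq_sign (m : ℕ) : ∀ c : Fin m → ℝ,
    ∑ ε : Fin m → Bool, (∑ i, sg (ε i) * c i) ^ 2 = 2 ^ m * ∑ i, c i ^ 2 := by
  induction m with
  | zero => intro c; simp
  | succ m ih =>
    intro c
    calc ∑ ε : Fin (m+1) → Bool, (∑ i, sg (ε i) * c i) ^ 2
        = ∑ z : Bool × (Fin m → Bool),
            (sg z.1 * c 0 + ∑ i : Fin m, sg (z.2 i) * c i.succ) ^ 2 := by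
          apply Fintype.sum_equiv (Fin.consEquiv (fun _ => Bool)).symm
          intro ε
          rw [Fin.sum_univ_succ]
          rfl
      _ = ∑ ε : Fin m → Bool,
            ((sg true * c 0 + ∑ i : Fin m, sg (ε i) * c i.succ) ^ 2
              + (sg false * c 0 + ∑ i : Fin m, sg (ε i) * c i.succ) ^ 2) := by
          rw [Fintype.sum_prod_type, Fintype.sum_bool, ← Finset.sum_add_distrib]
      _ = ∑ ε : Fin m → Bool,
            (2 * (∑ i : Fin m, sg (ε i) * c i.succ) ^ 2 + 2 * c 0 ^ 2) := by
          apply Finset.sum_congr rfl; intro ε _; rw [sg_true, sg_false]; ring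
      _ = 2 * (2 ^ m * ∑ i : Fin m, c i.succ ^ 2) + 2 ^ m * (2 * c 0 ^ 2) := by
          rw [Finset.sum_add_distrib, ← Finset.mul_sum, ih (fun i => c i.succ),
            Finset.sum_const, Finset.card_univ, Fintype.card_fun]
          simp [nsmul_eq_mul]; try push_cast; try ring
      _ = 2 ^ (m+1) * ∑ i : Fin (m+1), c i ^ 2 := by
          rw [Fin.sum_univ_succ]; ring

private lemma sum_quart_sign (m : ℕ) : ∀ c : Fin m → ℝ,
    ∑ ε : Fin m → Bool, (∑ i, sg (ε i) * c i) ^ 4 ≤ 3 * 2 ^ m * (∑ i, c i ^ 2) ^ 2 := by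
  induction m with
  | zero => intro c; simp
  | succ m ih =>
    intro c
    have h1 : ∑ ε : Fin (m+1) → Bool, (∑ i, sg (ε i) * c i) ^ 4
        = ∑ ε : Fin m → Bool,
            (2 * (∑ i : Fin m, sg (ε i) * c i.succ) ^ 4
              + 12 * (∑ i : Fin m, sg (ε i) * c i.succ) ^ 2 * c 0 ^ 2 + 2 * c 0 ^ 4) := by
      calc ∑ ε : Fin (m+1) → Bool, (∑ i, sg (ε i) * c i) ^ 4
          = ∑ z : Bool × (Fin m → Bool),
              (sg z.1 * c 0 + ∑ i : Fin m, sg (z.2 i) * c i.succ) ^ 4 := by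
            apply Fintype.sum_equiv (Fin.consEquiv (fun _ => Bool)).symm
            intro ε
            rw [Fin.sum_univ_succ]
            rfl
        _ = ∑ ε : Fin m → Bool,
              ((sg true * c 0 + ∑ i : Fin m, sg (ε i) * c i.succ) ^ 4
                + (sg false * c 0 + ∑ i : Fin m, sg (ε i) * c i.succ) ^ 4) := by
            rw [Fintype.sum_prod_type, Fintype.sum_bool, ← Finset.sum_add_distrib]
        _ = _ := by
            apply Finset.sum_congr rfl; intro ε _; rw [sg_true, sg_false]; ring
    rw [h1, Finset.sum_add_distrib, Finset.sum_add_distrib]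
    have hq := ih (fun i => c i.succ)
    have hs := sum_sq_sign m (fun i => c i.succ)
    have h2m : (0:ℝ) < 2 ^ m := by positivity
    have e1 : ∑ ε : Fin m → Bool, 2 * (∑ i : Fin m, sg (ε i) * c i.succ) ^ 4
        ≤ 2 * (3 * 2 ^ m * (∑ i : Fin m, c i.succ ^ 2) ^ 2) := by
      rw [← Finset.mul_sum]; linarith
    have e2 : ∑ ε : Fin m → Bool, 12 * (∑ i : Fin m, sg (ε i) * c i.succ) ^ 2 * c 0 ^ 2
        = 12 * (2 ^ m * ∑ i : Fin m, c i.succ ^ 2) * c 0 ^ 2 := by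
      rw [show (fun ε : Fin m → Bool => 12 * (∑ i : Fin m, sg (ε i) * c i.succ) ^ 2 * c 0 ^ 2)
        = (fun ε : Fin m → Bool => (12 * c 0 ^ 2) * (∑ i : Fin m, sg (ε i) * c i.succ) ^ 2)
        from by funext ε; ring, ← Finset.mul_sum, hs]
      ring
    have e3 : ∑ _ε : Fin m → Bool, 2 * c 0 ^ 4 = 2 ^ m * (2 * c 0 ^ 4) := by
      rw [Finset.sum_const, Finset.card_univ, Fintype.card_fun]
      simp [nsmul_eq_mul]; try push_cast; try ring
    rw [e2, e3, Fin.sum_univ_succ]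
    have hs2 : (0:ℝ) ≤ ∑ i : Fin m, c i.succ ^ 2 := Finset.sum_nonneg fun i _ => sq_nonneg _
    have e4 : (0:ℝ) ≤ 2 ^ m * (c 0 ^ 2) ^ 2 := mul_nonneg h2m.le (sq_nonneg _)
    have h2s : (2:ℝ) ^ (m+1) = 2 * 2 ^ m := by rw [pow_succ]; ring
    nlinarith [e1, e4, h2s, mul_nonneg (mul_nonneg h2m.le (sq_nonneg (c 0))) hs2]

private theorem khintchine (m : ℕ) (c : Fin m → ℝ) :
    Real.sqrt (∑ i, c i ^ 2) * 2 ^ m ≤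
      Real.sqrt 3 * ∑ ε : Fin m → Bool, |∑ i, sg (ε i) * c i| := by
  set X : (Fin m → Bool) → ℝ := fun ε => ∑ i, sg (ε i) * c i with hX
  set A := ∑ ε : Fin m → Bool, |X ε| with hA
  set T := ∑ ε : Fin m → Bool, |X ε| ^ 3 with hT
  set s2 := ∑ i, c i ^ 2 with hs2def
  have hs2 : 0 ≤ s2 := Finset.sum_nonneg fun i _ => sq_nonneg _
  have hB : ∑ ε : Fin m → Bool, X ε ^ 2 = 2 ^ m * s2 := sum_sq_sign m c
  have hC : ∑ ε : Fin m → Bool, X ε ^ 4 ≤ 3 * 2 ^ m * s2 ^ 2 := sum_quart_sign m c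
  have hA0 : 0 ≤ A := Finset.sum_nonneg fun _ _ => abs_nonneg _
  have hT0 : 0 ≤ T := Finset.sum_nonneg fun _ _ => pow_nonneg (abs_nonneg _) _
  have cs1 : (∑ ε : Fin m → Bool, X ε ^ 2) ^ 2 ≤ A * T := by
    have h := Finset.sum_mul_sq_le_sq_mul_sq Finset.univ
      (fun ε => Real.sqrt |X ε|) (fun ε => |X ε| * Real.sqrt |X ε|)
    have e1 : ∀ ε : Fin m → Bool,
        Real.sqrt |X ε| * (|X ε| * Real.sqrt |X ε|) = X ε ^ 2 := by
      intro ε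
      rw [show Real.sqrt |X ε| * (|X ε| * Real.sqrt |X ε|)
        = (Real.sqrt |X ε| * Real.sqrt |X ε|) * |X ε| from by ring,
        Real.mul_self_sqrt (abs_nonneg _), ← sq_abs]
      ring
    have e2 : ∀ ε : Fin m → Bool, Real.sqrt |X ε| ^ 2 = |X ε| :=
      fun ε => Real.sq_sqrt (abs_nonneg _)
    have e3 : ∀ ε : Fin m → Bool, (|X ε| * Real.sqrt |X ε|) ^ 2 = |X ε| ^ 3 := by
      intro ε
      rw [mul_pow, Real.sq_sqrt (abs_nonneg _)]
      ring
    calc (∑ ε : Fin m → Bool, X ε ^ 2) ^ 2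
        = (∑ ε : Fin m → Bool, Real.sqrt |X ε| * (|X ε| * Real.sqrt |X ε|)) ^ 2 := by
          rw [Finset.sum_congr rfl fun ε _ => e1 ε]
      _ ≤ (∑ ε : Fin m → Bool, Real.sqrt |X ε| ^ 2)
            * ∑ ε : Fin m → Bool, (|X ε| * Real.sqrt |X ε|) ^ 2 := h
      _ = A * T := by
          rw [Finset.sum_congr rfl fun ε _ => e2 ε, Finset.sum_congr rfl fun ε _ => e3 ε]
  have cs2 : T ^ 2 ≤ (∑ ε : Fin m → Bool, X ε ^ 2) * ∑ ε : Fin m → Bool, X ε ^ 4 := by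
    have h := Finset.sum_mul_sq_le_sq_mul_sq Finset.univ
      (fun ε => |X ε|) (fun ε => X ε ^ 2)
    calc T ^ 2 = (∑ ε : Fin m → Bool, |X ε| * X ε ^ 2) ^ 2 := by
          rw [hT]
          congr 1
          apply Finset.sum_congr rfl
          intro ε _
          rw [← sq_abs]
          ring
      _ ≤ (∑ ε : Fin m → Bool, |X ε| ^ 2) * ∑ ε : Fin m → Bool, (X ε ^ 2) ^ 2 := h
      _ = (∑ ε : Fin m → Bool, X ε ^ 2) * ∑ ε : Fin m → Bool, X ε ^ 4 := by
          congr 1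
          · apply Finset.sum_congr rfl; intro ε _; rw [sq_abs]
          · apply Finset.sum_congr rfl; intro ε _; ring
  -- now pure algebra
  have h2m : (0:ℝ) < 2 ^ m := by positivity
  rcases eq_or_lt_of_le hs2 with h0 | hs2pos
  · rw [← h0, Real.sqrt_zero, zero_mul]
    exact mul_nonneg (Real.sqrt_nonneg _) hA0
  · -- squares suffice
    have key : s2 * (2 ^ m * 2 ^ m) ≤ 3 * A ^ 2 := by
      have hBpos : 0 < 2 ^ m * s2 := mul_pos h2m hs2pos
      have c1 : (2 ^ m * s2) ^ 2 ≤ A * T := by rw [← hB]; exact cs1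
      have c2 : T ^ 2 ≤ (2 ^ m * s2) * (3 * 2 ^ m * s2 ^ 2) := by
        rw [← hB]
        exact le_trans cs2 (mul_le_mul_of_nonneg_left hC (Finset.sum_nonneg fun ε _ => sq_nonneg _))
      have c3 : ((2 ^ m * s2) ^ 2) * ((2 ^ m * s2) ^ 2) ≤ (A * T) * (A * T) :=
        mul_self_le_mul_self (sq_nonneg _) c1
      have c4 : (A * T) * (A * T) ≤ (A ^ 2) * ((2 ^ m * s2) * (3 * 2 ^ m * s2 ^ 2)) := by
        calc (A * T) * (A * T) = A ^ 2 * T ^ 2 := by ring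
          _ ≤ (A ^ 2) * ((2 ^ m * s2) * (3 * 2 ^ m * s2 ^ 2)) :=
            mul_le_mul_of_nonneg_left c2 (sq_nonneg A)
      have c5 : (2 ^ m * s2) ^ 2 ≤ 3 * A ^ 2 * s2 := by
        have h6 : ((2 ^ m * s2) ^ 2) * ((2 ^ m * s2) ^ 2)
            ≤ (3 * A ^ 2 * s2) * ((2 ^ m * s2) ^ 2) := by
          calc ((2 ^ m * s2) ^ 2) * ((2 ^ m * s2) ^ 2) ≤ (A ^ 2) * ((2 ^ m * s2) * (3 * 2 ^ m * s2 ^ 2)) :=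
            le_trans c3 c4
            _ = (3 * A ^ 2 * s2) * ((2 ^ m * s2) ^ 2) := by ring
        exact le_of_mul_le_mul_right h6 (by positivity)
      have h7 : (s2 * (2 ^ m * 2 ^ m)) * s2 ≤ (3 * A ^ 2) * s2 := by
        calc (s2 * (2 ^ m * 2 ^ m)) * s2 = (2 ^ m * s2) ^ 2 := by ring
          _ ≤ 3 * A ^ 2 * s2 := c5
          _ = (3 * A ^ 2) * s2 := by ring
      exact le_of_mul_le_mul_right h7 hs2pos
    have lhs_sq : (Real.sqrt s2 * 2 ^ m) ^ 2 = s2 * (2 ^ m * 2 ^ m) := by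
      rw [mul_pow, Real.sq_sqrt hs2]
      ring
    have rhs_sq : (Real.sqrt 3 * A) ^ 2 = 3 * A ^ 2 := by
      rw [mul_pow, Real.sq_sqrt (by norm_num : (3:ℝ) ≥ 0)]
    have h1 : (Real.sqrt s2 * 2 ^ m) ^ 2 ≤ (Real.sqrt 3 * A) ^ 2 := by
      rw [lhs_sq, rhs_sq]; exact key
    have h2 : 0 ≤ Real.sqrt 3 * A := mul_nonneg (Real.sqrt_nonneg _) hA0
    nlinarith [h1, h2, mul_nonneg (mul_nonneg (Real.sqrt_nonneg s2) h2m.le) h2]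

/-- **Theorem 3.3, upper estimate.** For `2 < p < ∞` and `1/r = 1/2 + 1/p`, there is `K ≥ 1`
such that for all scalars `λ_1, …, λ_m` and every finite family `x_1*, …, x_n*` of
functionals on `ℓ_p` with `sup_{‖x‖≤1} ∑_k |x_k*(x)| ≤ 1`, one has
`∑_k |∑_i λ_i |x_k*(e_i)|| ≤ K (∑_i |λ_i|^r)^(1/r)`.  This is the estimate
`‖∑ λ_i |δ_{e_i}|‖_{FBL[ℓ_p]} ≤ K (∑ |λ_i|^r)^(1/r)` written via the explicit formula
for the free Banach lattice norm. -/
theorem fbl_lp_abs_upper (p r : ℝ) (hp : 2 < p) (hr : 1 / r = 1 / 2 + 1 / p)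
    [Fact (1 ≤ ENNReal.ofReal p)] :
    ∃ K : ℝ, 1 ≤ K ∧
      ∀ (m : ℕ) (lam : Fin m → ℝ) (n : ℕ)
        (xs : Fin n → (lp (fun _ : ℕ => ℝ) (ENNReal.ofReal p) →L[ℝ] ℝ)),
        (∀ x, ‖x‖ ≤ 1 → ∑ k, |xs k x| ≤ 1) →
        ∑ k, abs (∑ i, lam i * |xs k (lp.single (ENNReal.ofReal p) (i : ℕ) (1 : ℝ))|) ≤
          K * (∑ i, |lam i| ^ r) ^ (1 / r) := by
  classical
  have hp0 : (0:ℝ) < p := by linarith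
  have hp2 : (0:ℝ) < p - 2 := by linarith
  have hPt : (ENNReal.ofReal p).toReal = p := ENNReal.toReal_ofReal hp0.le
  have hptpos : 0 < (ENNReal.ofReal p).toReal := by rw [hPt]; exact hp0
  -- exponent bookkeeping
  set q : ℝ := 2 * p / (p - 2) with hq
  have hq0 : 0 < q := by positivity
  have hq2 : 2 < q := by
    rw [hq, lt_div_iff₀ hp2]; nlinarith
  have hqp : (q - 2) / 2 * p = q := by
    rw [hq]; field_simp; ring
  have hsum1 : 1 / q + 1 / p + 1 / 2 = 1 := by
    rw [hq]; field_simp; ring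
  have hrinvpos : 0 < 1 / r := by rw [hr]; positivity
  have hrpos : 0 < r := by
    rcases lt_trichotomy r 0 with h | h | h
    · exfalso; have : 1 / r < 0 := by exact div_neg_of_pos_of_neg one_pos h
      linarith
    · exfalso; rw [h] at hrinvpos; simp at hrinvpos
    · exact h
  have hr1 : 1 < r := by
    have h1 : 1 / r < 1 := by
      rw [hr]
      have : 1 / p < 1 / 2 := by
        apply one_div_lt_one_div_of_lt <;> linarith
      linarith
    by_contra hcon
    push_neg at hcon
    have : (1:ℝ) ≤ 1 / r := by
      rw [le_div_iff₀ hrpos]; linarith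
    linarith
  have hconj : r.HolderConjugate q := by
    rw [Real.holderConjugate_iff]; constructor
    · exact hr1
    · rw [← one_div, ← one_div, hr]; linarith
  have hsqrt3 : (1:ℝ) ≤ Real.sqrt 3 := by
    rw [show (1:ℝ) = Real.sqrt 1 from (Real.sqrt_one).symm]
    exact Real.sqrt_le_sqrt (by norm_num)
  refine ⟨Real.sqrt 3, hsqrt3, ?_⟩
  intro m lam n xs H
  set P := ENNReal.ofReal p with hP
  set e : ℕ → lp (fun _ : ℕ => ℝ) P := fun j => lp.single P j (1:ℝ) with he
  set b : Fin n → Fin m → ℝ := fun k i => xs k (e (i:ℕ)) with hb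
  set a : Fin n → Fin m → ℝ := fun k i => |b k i| with ha
  set d : Fin m → ℝ := fun i => ∑ k, a k i with hd
  have ha0 : ∀ k i, 0 ≤ a k i := fun k i => abs_nonneg _
  have hd0 : ∀ i, 0 ≤ d i := fun i => Finset.sum_nonneg fun k _ => ha0 k i
  -- homogeneous form of the hypothesis
  have H' : ∀ x : lp (fun _ : ℕ => ℝ) P, ∑ k, |xs k x| ≤ ‖x‖ := by
    intro x
    rcases eq_or_ne x 0 with h | h
    · simp [h]
    · have hx : 0 < ‖x‖ := norm_pos_iff.mpr h
      have h1 : ‖(‖x‖⁻¹ : ℝ) • x‖ ≤ 1 := by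
        rw [norm_smul, norm_inv, norm_norm, inv_mul_cancel₀ hx.ne']
      have h2 := H _ h1
      have h3 : ∀ k : Fin n, |xs k ((‖x‖⁻¹ : ℝ) • x)| = ‖x‖⁻¹ * |xs k x| := by
        intro k
        rw [map_smul, smul_eq_mul, abs_mul, abs_of_pos (inv_pos.2 hx)]
      rw [Finset.sum_congr rfl (fun k _ => h3 k), ← Finset.mul_sum] at h2
      calc ∑ k, |xs k x| = ‖x‖ * (‖x‖⁻¹ * ∑ k, |xs k x|) := by
            field_simp
        _ ≤ ‖x‖ * 1 := mul_le_mul_of_nonneg_left h2 hx.le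
        _ = ‖x‖ := mul_one _
  -- applying a functional to lp.single
  have hsingle : ∀ (k : Fin n) (j : ℕ) (cc : ℝ), xs k (lp.single P j cc) = cc * xs k (e j) := by
    intro k j cc
    have h1 : lp.single P j cc = cc • e j := by
      apply lp.ext
      funext i'
      by_cases hji : i' = j
      · subst hji
        simp [he, lp.single_apply_self]
      · simp [he, lp.single_apply_ne _ _ _ hji, Pi.single_apply, hji]
    rw [h1, map_smul, smul_eq_mul]
  -- norm of a finite combination of basis vectors
  have hnorm : ∀ g : Fin m → ℝ,
      ‖∑ i : Fin m, lp.single (E := fun _ : ℕ => ℝ) P ((i : Fin m) : ℕ) (g i)‖ = (∑ i, |g i| ^ p) ^ (1/p) := by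
    intro g
    set G : ℕ → ℝ := fun j => if h : j < m then g ⟨j, h⟩ else 0 with hG
    have h1 : (∑ i : Fin m, lp.single (E := fun _ : ℕ => ℝ) P ((i : Fin m) : ℕ) (g i))
        = ∑ j ∈ Finset.range m, lp.single P j (G j) := by
      rw [← Fin.sum_univ_eq_sum_range (fun j => lp.single P j (G j)) m]
      apply Finset.sum_congr rfl
      intro i _
      congr 1
      rw [hG]
      simp [i.isLt]
    have h2 := lp.norm_sum_single hptpos G (Finset.range m)
    rw [← h1, hPt] at h2
    have h3 : ∑ j ∈ Finset.range m, ‖G j‖ ^ p = ∑ i : Fin m, |g i| ^ p := by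
      rw [← Fin.sum_univ_eq_sum_range (fun j => ‖G j‖ ^ p) m]
      apply Finset.sum_congr rfl
      intro i _
      congr 1
      rw [hG, Real.norm_eq_abs]
      simp [i.isLt]
    rw [h3] at h2
    rw [← h2, one_div, Real.rpow_rpow_inv (norm_nonneg _) hp0.ne']
  -- Key Khintchine-based estimate
  have L4 : ∀ t : Fin m → ℝ, ∑ k, Real.sqrt (∑ i, (t i * b k i) ^ 2)
      ≤ Real.sqrt 3 * (∑ i, |t i| ^ p) ^ (1/p) := by
    intro t
    set Np := (∑ i, |t i| ^ p) ^ (1/p) with hNp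
    have hNp0 : 0 ≤ Np :=
      Real.rpow_nonneg (Finset.sum_nonneg fun i _ =>
        Real.rpow_nonneg (abs_nonneg _) _) _
    have key : ∀ ε : Fin m → Bool, ∑ k, |∑ i, sg (ε i) * (t i * b k i)| ≤ Np := by
      intro ε
      set x := ∑ i : Fin m, lp.single (E := fun _ : ℕ => ℝ) P ((i : Fin m) : ℕ) (sg (ε i) * t i)
        with hx
      have hxnorm : ‖x‖ = Np := by
        rw [hx, hnorm, hNp]
        congr 1
        apply Finset.sum_congr rfl
        intro i _
        rw [abs_mul, abs_sg, one_mul]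
      have happ : ∀ k : Fin n, xs k x = ∑ i, sg (ε i) * (t i * b k i) := by
        intro k
        rw [hx, map_sum]
        apply Finset.sum_congr rfl
        intro i _
        rw [hsingle k (i : ℕ) (sg (ε i) * t i)]
        rw [hb]
        ring
      calc ∑ k, |∑ i, sg (ε i) * (t i * b k i)| = ∑ k, |xs k x| := by
            apply Finset.sum_congr rfl
            intro k _
            rw [happ k]
        _ ≤ ‖x‖ := H' x
        _ = Np := hxnorm
    have h2m : (0:ℝ) < 2 ^ m := by positivity
    have h5 : (∑ k, Real.sqrt (∑ i, (t i * b k i) ^ 2)) * 2 ^ m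
        ≤ Real.sqrt 3 * ∑ ε : Fin m → Bool, ∑ k, |∑ i, sg (ε i) * (t i * b k i)| := by
      rw [Finset.sum_mul]
      calc ∑ k, Real.sqrt (∑ i, (t i * b k i) ^ 2) * 2 ^ m
          ≤ ∑ k, Real.sqrt 3 * ∑ ε : Fin m → Bool, |∑ i, sg (ε i) * (t i * b k i)| :=
            Finset.sum_le_sum fun k _ => khintchine m (fun i => t i * b k i)
        _ = Real.sqrt 3 * ∑ k, ∑ ε : Fin m → Bool, |∑ i, sg (ε i) * (t i * b k i)| := by
            rw [Finset.mul_sum]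
        _ = Real.sqrt 3 * ∑ ε : Fin m → Bool, ∑ k, |∑ i, sg (ε i) * (t i * b k i)| := by
            rw [Finset.sum_comm]
    have h6 : ∑ ε : Fin m → Bool, ∑ k, |∑ i, sg (ε i) * (t i * b k i)| ≤ 2 ^ m * Np := by
      calc ∑ ε : Fin m → Bool, ∑ k, |∑ i, sg (ε i) * (t i * b k i)|
          ≤ ∑ _ε : Fin m → Bool, Np := Finset.sum_le_sum fun ε _ => key ε
        _ = 2 ^ m * Np := by
            rw [Finset.sum_const, Finset.card_univ, Fintype.card_fun]
            simp [nsmul_eq_mul]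
            try push_cast
            try ring
    have h7 : (∑ k, Real.sqrt (∑ i, (t i * b k i) ^ 2)) * 2 ^ m
        ≤ (Real.sqrt 3 * Np) * 2 ^ m := by
      calc (∑ k, Real.sqrt (∑ i, (t i * b k i) ^ 2)) * 2 ^ m
          ≤ Real.sqrt 3 * ∑ ε : Fin m → Bool, ∑ k, |∑ i, sg (ε i) * (t i * b k i)| := h5
        _ ≤ Real.sqrt 3 * (2 ^ m * Np) :=
            mul_le_mul_of_nonneg_left h6 (Real.sqrt_nonneg _)
        _ = (Real.sqrt 3 * Np) * 2 ^ m := by ring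
    exact le_of_mul_le_mul_right h7 h2m
  -- the ℓ_q bound on d
  set S := ∑ i, d i ^ q with hS
  have hS0 : 0 ≤ S := Finset.sum_nonneg fun i _ => Real.rpow_nonneg (hd0 i) _
  have step1 : S = ∑ k, ∑ i, d i ^ (q - 1) * a k i := by
    rw [hS, Finset.sum_comm]
    apply Finset.sum_congr rfl
    intro i _
    have hsplit : d i ^ q = d i ^ (q - 1) * d i := by
      rcases eq_or_lt_of_le (hd0 i) with h0 | hpos
      · rw [← h0, Real.zero_rpow (by positivity : q ≠ 0),
          Real.zero_rpow (by linarith : (0:ℝ) < q - 1).ne', zero_mul]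
      · have h9 := Real.rpow_add_one hpos.ne' (q - 1)
        rw [show q - 1 + 1 = q from by ring] at h9
        exact h9
    rw [hsplit, ← Finset.mul_sum]
  have rpow_sq : ∀ (x : ℝ), 0 ≤ x → ∀ (u : ℝ), (x ^ u) ^ 2 = x ^ (u * 2) := by
    intro x hx u
    rw [Real.rpow_mul hx, Real.rpow_two]
  have step2 : ∀ k : Fin n, ∑ i, d i ^ (q - 1) * a k i
      ≤ Real.sqrt (∑ i, d i ^ (q - 2) * (a k i) ^ 2) * Real.sqrt S := by
    intro k
    have hcs := Finset.sum_mul_sq_le_sq_mul_sq Finset.univ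
      (fun i : Fin m => d i ^ ((q - 2)/2) * a k i) (fun i : Fin m => d i ^ (q/2))
    have e1 : ∀ i : Fin m, (d i ^ ((q - 2)/2) * a k i) * d i ^ (q/2)
        = d i ^ (q - 1) * a k i := by
      intro i
      rcases eq_or_lt_of_le (hd0 i) with h0 | hpos
      · have ha' : a k i = 0 := by
          have h1 : a k i ≤ d i := Finset.single_le_sum (f := fun k' => a k' i)
            (fun k' _ => ha0 k' i) (Finset.mem_univ k)
          have := ha0 k i
          linarith [h1, h0.symm ▸ (le_of_eq (rfl : d i = d i))]
        rw [ha']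
        ring
      · rw [show (d i ^ ((q - 2)/2) * a k i) * d i ^ (q/2)
          = d i ^ ((q - 2)/2) * d i ^ (q/2) * a k i from by ring,
          ← Real.rpow_add hpos]
        congr 2
        ring
    have e2 : ∀ i : Fin m, (d i ^ ((q - 2)/2) * a k i) ^ 2 = d i ^ (q - 2) * (a k i) ^ 2 := by
      intro i
      rw [mul_pow, rpow_sq (d i) (hd0 i)]
      congr 2
      ring
    have e3 : ∀ i : Fin m, (d i ^ (q/2)) ^ 2 = d i ^ q := by
      intro i
      rw [rpow_sq (d i) (hd0 i)]
      congr 1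
      ring
    rw [Finset.sum_congr rfl fun i _ => e1 i, Finset.sum_congr rfl fun i _ => e2 i,
      Finset.sum_congr rfl fun i _ => e3 i] at hcs
    have hlhs0 : 0 ≤ ∑ i, d i ^ (q - 1) * a k i :=
      Finset.sum_nonneg fun i _ => mul_nonneg (Real.rpow_nonneg (hd0 i) _) (ha0 k i)
    calc ∑ i, d i ^ (q - 1) * a k i
        = Real.sqrt ((∑ i, d i ^ (q - 1) * a k i) ^ 2) := (Real.sqrt_sq hlhs0).symm
      _ ≤ Real.sqrt ((∑ i, d i ^ (q - 2) * (a k i) ^ 2) * S) := Real.sqrt_le_sqrt hcs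
      _ = Real.sqrt (∑ i, d i ^ (q - 2) * (a k i) ^ 2) * Real.sqrt S :=
          Real.sqrt_mul (Finset.sum_nonneg fun i _ =>
            mul_nonneg (Real.rpow_nonneg (hd0 i) _) (sq_nonneg _)) _
  have step3 : ∑ k, Real.sqrt (∑ i, d i ^ (q - 2) * (a k i) ^ 2)
      ≤ Real.sqrt 3 * S ^ (1/p) := by
    have hL := L4 (fun i => d i ^ ((q - 2)/2))
    have e4 : ∀ k : Fin n, ∀ i : Fin m, (d i ^ ((q - 2)/2) * b k i) ^ 2
        = d i ^ (q - 2) * (a k i) ^ 2 := by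
      intro k i
      rw [mul_pow, rpow_sq (d i) (hd0 i), ha, sq_abs]
      congr 2
      ring
    have e5 : ∀ i : Fin m, |d i ^ ((q - 2)/2)| ^ p = d i ^ q := by
      intro i
      rw [abs_of_nonneg (Real.rpow_nonneg (hd0 i) _), ← Real.rpow_mul (hd0 i), hqp]
    calc ∑ k, Real.sqrt (∑ i, d i ^ (q - 2) * (a k i) ^ 2)
        = ∑ k, Real.sqrt (∑ i, (d i ^ ((q - 2)/2) * b k i) ^ 2) := by
          apply Finset.sum_congr rfl
          intro k _
          rw [Finset.sum_congr rfl fun i _ => (e4 k i).symm]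
      _ ≤ Real.sqrt 3 * (∑ i, |d i ^ ((q - 2)/2)| ^ p) ^ (1/p) := hL
      _ = Real.sqrt 3 * S ^ (1/p) := by
          rw [Finset.sum_congr rfl fun i _ => e5 i]
  have step4 : S ≤ Real.sqrt 3 * S ^ (1/p) * Real.sqrt S := by
    calc S = ∑ k, ∑ i, d i ^ (q - 1) * a k i := step1
      _ ≤ ∑ k, Real.sqrt (∑ i, d i ^ (q - 2) * (a k i) ^ 2) * Real.sqrt S :=
          Finset.sum_le_sum fun k _ => step2 k
      _ = (∑ k, Real.sqrt (∑ i, d i ^ (q - 2) * (a k i) ^ 2)) * Real.sqrt S := by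
          rw [Finset.sum_mul]
      _ ≤ Real.sqrt 3 * S ^ (1/p) * Real.sqrt S :=
          mul_le_mul_of_nonneg_right step3 (Real.sqrt_nonneg _)
  have step5 : S ^ (1/q) ≤ Real.sqrt 3 := by
    rcases eq_or_lt_of_le hS0 with h0 | hSpos
    · rw [← h0, Real.zero_rpow (by positivity : (1:ℝ)/q ≠ 0)]
      linarith
    · have hfact : S = S ^ (1/q) * (S ^ (1/p) * S ^ ((1:ℝ)/2)) := by
        rw [← Real.rpow_add hSpos, ← Real.rpow_add hSpos]
        rw [show 1/q + (1/p + 1/2) = 1 from by linarith]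
        rw [Real.rpow_one]
      have hsqS : Real.sqrt S = S ^ ((1:ℝ)/2) := Real.sqrt_eq_rpow S
      have hpos' : 0 < S ^ (1/p) * S ^ ((1:ℝ)/2) :=
        mul_pos (Real.rpow_pos_of_pos hSpos _) (Real.rpow_pos_of_pos hSpos _)
      have h8 : S ^ (1/q) * (S ^ (1/p) * S ^ ((1:ℝ)/2))
          ≤ Real.sqrt 3 * (S ^ (1/p) * S ^ ((1:ℝ)/2)) := by
        rw [← hfact]
        calc S ≤ Real.sqrt 3 * S ^ (1/p) * Real.sqrt S := step4
          _ = Real.sqrt 3 * (S ^ (1/p) * S ^ ((1:ℝ)/2)) := by rw [hsqS]; ring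
      exact le_of_mul_le_mul_right h8 hpos'
  -- conclusion via Hölder
  have hfinal1 : ∑ k, |∑ i, lam i * a k i| ≤ ∑ i, |lam i| * d i := by
    calc ∑ k, |∑ i, lam i * a k i|
        ≤ ∑ k, ∑ i, |lam i * a k i| :=
          Finset.sum_le_sum fun k _ => Finset.abs_sum_le_sum_abs _ _
      _ = ∑ k, ∑ i, |lam i| * a k i := by
          apply Finset.sum_congr rfl
          intro k _
          apply Finset.sum_congr rfl
          intro i _
          rw [abs_mul, abs_of_nonneg (ha0 k i)]
      _ = ∑ i, |lam i| * d i := by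
          rw [Finset.sum_comm]
          apply Finset.sum_congr rfl
          intro i _
          rw [← Finset.mul_sum]
  have hfinal2 : ∑ i, |lam i| * d i
      ≤ (∑ i, |lam i| ^ r) ^ (1/r) * S ^ (1/q) := by
    have hH := Real.inner_le_Lp_mul_Lq Finset.univ (fun i => |lam i|) d hconj
    have e6 : ∀ i : Fin m, |(|lam i|)| ^ r = |lam i| ^ r := fun i => by rw [abs_abs]
    have e7 : ∀ i : Fin m, |d i| ^ q = d i ^ q := fun i => by rw [abs_of_nonneg (hd0 i)]
    rw [Finset.sum_congr rfl fun i _ => e6 i, Finset.sum_congr rfl fun i _ => e7 i] at hH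
    exact hH
  have hlamnn : 0 ≤ (∑ i, |lam i| ^ r) ^ (1/r) :=
    Real.rpow_nonneg (Finset.sum_nonneg fun i _ => Real.rpow_nonneg (abs_nonneg _) _) _
  calc ∑ k, |∑ i, lam i * a k i|
      ≤ (∑ i, |lam i| ^ r) ^ (1/r) * S ^ (1/q) := le_trans hfinal1 hfinal2
    _ ≤ (∑ i, |lam i| ^ r) ^ (1/r) * Real.sqrt 3 :=
        mul_le_mul_of_nonneg_left step5 hlamnn
    _ = Real.sqrt 3 * (∑ i, |lam i| ^ r) ^ (1/r) := by ring
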